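/- Let K: [0,1] → ℝ≥0 be Lipschitz with ∫₀¹ K = 1, and set α_N = 1/((N−1)(1−e_K(N))) where e_K(N) = ∫₀¹ K − (1/(N−1))∑_{s=1}^{N−1} K(s/(N−1)). If N > 2·Lip(K) + 1, then α_N ≤ 4·e^{Lip(K)/(N−1)}/(N−1). -/

import Mathlib

open MeasureTheory Finset

/-- If `N > 2·Lip(K) + 1`, then
`α_N = 1/((N−1)(1−e_K(N))) ≤ 4·exp(Lip(K)/(N−1))/(N−1)`. -/
theorem alphaN_bound (K : ℝ → ℝ) (L : NNReal) (N : ℕ)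
    (hK : LipschitzOnWith L K (Set.Icc 0 1))
    (hKpos : ∀ x ∈ Set.Icc (0:ℝ) 1, 0 ≤ K x)
    (hKint : (∫ x in (0:ℝ)..1, K x) = 1)
    (hN : (N : ℝ) > 2 * (L : ℝ) + 1) :
    (1 : ℝ) / (((N:ℝ) - 1) *
        (1 - (∫ x in (0:ℝ)..1, K x
          - (1 / ((N:ℝ) - 1)) * ∑ s ∈ Finset.Icc 1 (N - 1), K ((s : ℝ) / ((N:ℝ) - 1)))))
      ≤ 4 * Real.exp ((L : ℝ) / ((N:ℝ) - 1)) / ((N:ℝ) - 1) := by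
  have hL : (0:ℝ) ≤ L := L.coe_nonneg
  have hN1 : 1 < N := by
    have : (1:ℝ) < N := by linarith
    exact_mod_cast this
  set n : ℕ := N - 1 with hndef
  have hcast : ((n:ℝ)) = (N:ℝ) - 1 := by
    have : (n:ℕ) + 1 = N := by omega
    push_cast [← this]; ring
  have hn2L : 2 * (L:ℝ) < n := by rw [hcast]; linarith
  have hnpos : (0:ℝ) < n := by linarith
  have hKc : ContinuousOn K (Set.Icc 0 1) := hK.continuousOn
  have hmem : ∀ i : ℕ, i < n → ∀ x ∈ Set.Icc ((i:ℝ)/n) (((i:ℝ)+1)/n), x ∈ Set.Icc (0:ℝ) 1 := by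
    intro i hi x hx
    obtain ⟨h1, h2⟩ := hx
    constructor
    · have : (0:ℝ) ≤ (i:ℝ)/n := by positivity
      linarith
    · have : ((i:ℝ)+1)/n ≤ 1 := by
        rw [div_le_one hnpos]
        have : (i:ℝ) + 1 ≤ n := by exact_mod_cast Nat.succ_le_of_lt hi
        linarith
      linarith
  have hintg : ∀ i : ℕ, i < n → IntervalIntegrable K volume ((i:ℝ)/n) (((i:ℝ)+1)/n) := by
    intro i hi
    apply ContinuousOn.intervalIntegrable
    apply hKc.mono
    intro x hx
    apply hmem i hi
    rwa [Set.uIcc_of_le (by apply div_le_div_of_nonneg_right _ hnpos.le; linarith)] at hx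
  -- each piece bound
  have piece : ∀ i : ℕ, i < n →
      (∫ x in ((i:ℝ)/n)..(((i:ℝ)+1)/n), K x) ≤ (K (((i:ℝ)+1)/n) + (L:ℝ)/n) * (1/n) := by
    intro i hi
    have hab : (i:ℝ)/n ≤ ((i:ℝ)+1)/n := by
      apply div_le_div_of_nonneg_right _ hnpos.le; linarith
    have hmono : ∀ x ∈ Set.Icc ((i:ℝ)/n) (((i:ℝ)+1)/n), K x ≤ K (((i:ℝ)+1)/n) + (L:ℝ)/n := by
      intro x hx
      have hx01 := hmem i hi x hx
      have he : (((i:ℝ)+1)/n) ∈ Set.Icc (0:ℝ) 1 := hmem i hi _ ⟨hab, le_refl _⟩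
      have hdist := hK.dist_le_mul x hx01 _ he
      have habs : |x - ((i:ℝ)+1)/n| ≤ 1/n := by
        rw [abs_le]
        obtain ⟨h1, h2⟩ := hx
        constructor
        · have : ((i:ℝ)+1)/n - (i:ℝ)/n = 1/n := by field_simp; ring
          linarith
        · linarith [one_div_nonneg.mpr hnpos.le]
      rw [Real.dist_eq] at hdist
      have hfin : |K x - K (((i:ℝ)+1)/n)| ≤ (L:ℝ) * (1/n) := by
        calc |K x - K (((i:ℝ)+1)/n)| ≤ (L:ℝ) * |x - ((i:ℝ)+1)/n| := hdist
          _ ≤ (L:ℝ) * (1/n) := by apply mul_le_mul_of_nonneg_left habs hL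
      have h2 := (abs_le.mp hfin).2
      have hh : (L:ℝ) * (1/n) = (L:ℝ)/n := by ring
      linarith [hh ▸ h2]
    have hlen : ((i:ℝ)+1)/n - (i:ℝ)/n = 1/n := by field_simp; ring
    calc (∫ x in ((i:ℝ)/n)..(((i:ℝ)+1)/n), K x)
        ≤ ∫ _x in ((i:ℝ)/n)..(((i:ℝ)+1)/n), (K (((i:ℝ)+1)/n) + (L:ℝ)/n) := by
          exact intervalIntegral.integral_mono_on hab (hintg i hi) intervalIntegrable_const hmono
      _ = (K (((i:ℝ)+1)/n) + (L:ℝ)/n) * (1/n) := by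
          rw [intervalIntegral.integral_const, smul_eq_mul, hlen, mul_comm]
  -- sum of adjacent integrals
  have hsum : ∑ i ∈ Finset.range n, (∫ x in ((i:ℝ)/n)..(((i:ℝ)+1)/n), K x)
      = ∫ x in (0:ℝ)..1, K x := by
    have := intervalIntegral.sum_integral_adjacent_intervals (a := fun i : ℕ => (i:ℝ)/n)
      (f := K) (μ := volume) (n := n) (fun i hi => by
        have := hintg i hi; convert this using 2 <;> push_cast <;> ring)
    simp only [Nat.cast_zero, zero_div] at this
    rw [div_self hnpos.ne'] at this
    rw [← this]
    apply Finset.sum_congr rfl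
    intro i _
    congr 1
    push_cast; ring
  -- sum lower bound
  set S : ℝ := ∑ s ∈ Finset.Icc 1 n, K ((s : ℝ) / ((N:ℝ) - 1)) with hSdef
  have hSeq : S = ∑ i ∈ Finset.range n, K (((i:ℝ)+1)/n) := by
    rw [hSdef, ← Finset.Ico_add_one_right_eq_Icc, Finset.sum_Ico_eq_sum_range]
    apply Finset.sum_congr (by congr 1)
    intro i _
    rw [hcast]
    congr 1
    push_cast; ring
  have hSlow : (n:ℝ) - (L:ℝ) ≤ S := by
    have h1 : (1:ℝ) ≤ ∑ i ∈ Finset.range n, (K (((i:ℝ)+1)/n) + (L:ℝ)/n) * (1/n) := by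
      calc (1:ℝ) = ∫ x in (0:ℝ)..1, K x := hKint.symm
        _ = ∑ i ∈ Finset.range n, (∫ x in ((i:ℝ)/n)..(((i:ℝ)+1)/n), K x) := hsum.symm
        _ ≤ _ := Finset.sum_le_sum (fun i hi => piece i (Finset.mem_range.mp hi))
    have h2 : ∑ i ∈ Finset.range n, (K (((i:ℝ)+1)/n) + (L:ℝ)/n) * (1/n)
        = (S + (L:ℝ))/n := by
      simp only [add_mul]
      rw [Finset.sum_add_distrib, Finset.sum_const, Finset.card_range, nsmul_eq_mul,
        ← Finset.sum_mul, ← hSeq]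
      field_simp
    rw [h2] at h1
    have := (one_le_div hnpos).mp h1
    linarith
  -- finish
  have hS2 : (n:ℝ)/2 < S := by linarith
  have hSpos : (0:ℝ) < S := by linarith
  have hNne : ((N:ℝ) - 1) ≠ 0 := by rw [← hcast]; exact hnpos.ne'
  have hKint01 : IntervalIntegrable K volume 0 1 := by
    apply ContinuousOn.intervalIntegrable
    rwa [Set.uIcc_of_le (by norm_num : (0:ℝ) ≤ 1)]
  have hint2 : (∫ x in (0:ℝ)..1, (K x - 1 / ((N:ℝ) - 1) * S)) = 1 - 1 / ((N:ℝ) - 1) * S := by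
    rw [intervalIntegral.integral_sub hKint01 intervalIntegrable_const, hKint,
      intervalIntegral.integral_const]
    norm_num
  rw [hint2]
  have hdenom : ((N:ℝ) - 1) * (1 - (1 - 1 / ((N:ℝ) - 1) * S)) = S := by
    field_simp
    ring
  rw [hdenom]
  have h1 : (1:ℝ)/S ≤ 2/(n:ℝ) := by
    rw [div_le_div_iff₀ hSpos hnpos]
    linarith
  have h2 : (2:ℝ)/(n:ℝ) ≤ 4 * Real.exp ((L:ℝ) / ((N:ℝ) - 1)) / ((N:ℝ) - 1) := by
    rw [← hcast, div_le_div_iff₀ hnpos hnpos]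
    nlinarith [Real.add_one_le_exp ((L:ℝ)/n), div_nonneg hL hnpos.le]
  linarith
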